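/- Every finite PCM graph contains an induced subgraph isomorphic to 2·K₂ (two disjoint edges with no edges between them). -/
import Mathlib


/-- Every finite PCM graph contains an induced copy of `2·K₂`: a finite
connected bipartite graph `H` with parts `Z`, `W`, `2 ≤ |Z| ≤ |W|`, having a
perfect complement matching (an injection `m` of `Z` into `W` with `z ≁ m z`
for all `z ∈ Z`) contains vertices `z', z'' ∈ Z`, `w', w'' ∈ W` with
`z' ~ w''`, `z'' ~ w'`, `z' ≁ w'`, `z'' ≁ w''`. -/
theorem pcm_contains_two_K2 {α : Type*} [Fintype α] (H : SimpleGraph α)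
    (Z W : Finset α) (hdisj : Disjoint Z W) (hcover : ∀ v, v ∈ Z ∨ v ∈ W)
    (hacross : ∀ u v, H.Adj u v → (u ∈ Z ∧ v ∈ W) ∨ (u ∈ W ∧ v ∈ Z))
    (hconn : H.Connected) (hZ2 : 2 ≤ Z.card) (hZW : Z.card ≤ W.card)
    (m : {z // z ∈ Z} → α) (hmW : ∀ z, m z ∈ W)
    (hminj : Function.Injective m)
    (hmna : ∀ z : {z // z ∈ Z}, ¬ H.Adj z.1 (m z)) :
    ∃ z' z'' w' w'' : α, z' ∈ Z ∧ z'' ∈ Z ∧ w' ∈ W ∧ w'' ∈ W ∧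
      z' ≠ z'' ∧ w' ≠ w'' ∧
      H.Adj z' w'' ∧ H.Adj z'' w' ∧ ¬ H.Adj z' w' ∧ ¬ H.Adj z'' w'' := by
  classical
  by_contra hcon
  set N : α → Finset α := fun z => W.filter (fun w => H.Adj z w) with hN
  have hZne : Z.Nonempty := Finset.card_pos.mp (by omega)
  obtain ⟨z₀, hz₀Z, hz₀max⟩ := Z.exists_max_image (fun z => (N z).card) hZne
  have hchain : ∀ z ∈ Z, N z ⊆ N z₀ := by
    intro z hz
    by_contra hsub
    obtain ⟨w'', hw''N, hw''n⟩ := Finset.not_subset.mp hsub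
    by_cases hsub2 : N z₀ ⊆ N z
    · have heq : N z₀ = N z :=
        Finset.eq_of_subset_of_card_le hsub2 (hz₀max z hz)
      exact hw''n (heq ▸ hw''N)
    · obtain ⟨w', hw'N, hw'n⟩ := Finset.not_subset.mp hsub2
      have hw''W : w'' ∈ W := (Finset.mem_filter.mp hw''N).1
      have hw'W : w' ∈ W := (Finset.mem_filter.mp hw'N).1
      have hzw'' : H.Adj z w'' := (Finset.mem_filter.mp hw''N).2
      have hz₀w' : H.Adj z₀ w' := (Finset.mem_filter.mp hw'N).2
      have hzw' : ¬ H.Adj z w' := fun h => hw'n (Finset.mem_filter.mpr ⟨hw'W, h⟩)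
      have hz₀w'' : ¬ H.Adj z₀ w'' := fun h => hw''n (Finset.mem_filter.mpr ⟨hw''W, h⟩)
      have hne : z ≠ z₀ := fun h => hz₀w'' (h ▸ hzw'')
      have hwne : w' ≠ w'' := fun h => hzw' (h ▸ hzw'')
      exact hcon ⟨z, z₀, w', w'', hz, hz₀Z, hw'W, hw''W, hne, hwne,
        hzw'', hz₀w', hzw', hz₀w''⟩
  have hall : ∀ w ∈ W, H.Adj z₀ w := by
    intro w hw
    have hwz : w ≠ z₀ := fun h => Finset.disjoint_left.mp hdisj (h ▸ hz₀Z) hw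
    obtain ⟨p⟩ := hconn.preconnected w z₀
    cases p with
    | nil => exact absurd rfl hwz
    | @cons _ u _ h q =>
      rcases hacross _ _ h with ⟨hwZ, _⟩ | ⟨_, huZ⟩
      · exact absurd hw (Finset.disjoint_left.mp hdisj hwZ)
      · have hmem : w ∈ N u := Finset.mem_filter.mpr ⟨hw, h.symm⟩
        have := hchain u huZ hmem
        exact (Finset.mem_filter.mp this).2
  exact hmna ⟨z₀, hz₀Z⟩ (hall _ (hmW ⟨z₀, hz₀Z⟩))
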